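/- Let Γ ⊆ C_b(S) be admissible, let p and q be Borel probability transition kernels on S, and let π_q ∈ P(S) be a stationary probability measure of q (i.e. ∫_S q(x,A) π_q(dx) = π_q(A) for all Borel A). Suppose f : S → ℝ satisfies f(x) = −log ∫_S e^{−g(y)} p(x,dy) − g(x) + a for all x ∈ S, for some g ∈ Γ and a ∈ ℝ. Then ∫_S f dπ_q ≤ ∫_S G_Γ( q(x,·) ‖ p(x,·) ) π_q(dx) + a, where the integral on the right is taken as an upper (outer) integral. -/

import Mathlib

open MeasureTheory Filter Topology BoundedContinuousFunction Set ENNReal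

noncomputable section

variable {S : Type*}

/-- Integral of a function against a finite signed measure. -/
def sInt [MeasurableSpace S] (μ : MeasureTheory.SignedMeasure S) (g : S → ℝ) : ℝ :=
  ∫ x, g x ∂μ.toJordanDecomposition.posPart - ∫ x, g x ∂μ.toJordanDecomposition.negPart

/-- Γ-divergence, signed first argument. -/
def GdivS [MeasurableSpace S] [TopologicalSpace S]
    (Γ : Set (BoundedContinuousFunction S ℝ)) (μ : SignedMeasure S) (ν : Measure S) : EReal :=
  ⨆ g ∈ Γ, ((sInt μ g - Real.log (∫ x, Real.exp (g x) ∂ν) : ℝ) : EReal)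

/-- Γ-divergence. -/
def Gdiv [MeasurableSpace S] [TopologicalSpace S]
    (Γ : Set (BoundedContinuousFunction S ℝ)) (μ ν : Measure S) : EReal :=
  ⨆ g ∈ Γ, ((∫ x, g x ∂μ - Real.log (∫ x, Real.exp (g x) ∂ν) : ℝ) : EReal)

/-- W_Γ of a signed measure. -/
def WdivS [MeasurableSpace S] [TopologicalSpace S]
    (Γ : Set (BoundedContinuousFunction S ℝ)) (η : SignedMeasure S) : EReal :=
  ⨆ g ∈ Γ, ((sInt η g : ℝ) : EReal)

-- Relative entropy
open scoped Classical in
def relEnt [MeasurableSpace S] (γ ν : Measure S) : EReal :=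
  if γ ≪ ν ∧ Integrable (fun x => Real.log ((γ.rnDeriv ν x).toReal)) γ
  then ((∫ x, Real.log ((γ.rnDeriv ν x).toReal) ∂γ : ℝ) : EReal)
  else ⊤

/-- The weak topology on C_b(S) induced by M(S). -/
def cbWeak (S : Type*) [MeasurableSpace S] [TopologicalSpace S] :
    TopologicalSpace (BoundedContinuousFunction S ℝ) :=
  TopologicalSpace.induced (fun f (μ : SignedMeasure S) => sInt μ f) inferInstance

/-- Admissible sets of test functions. -/
structure Admissible [MeasurableSpace S] [TopologicalSpace S]
    (Γ : Set (BoundedContinuousFunction S ℝ)) : Prop where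
  convex : Convex ℝ Γ
  closed : @IsClosed _ (cbWeak S) Γ
  neg_mem : ∀ g ∈ Γ, -g ∈ Γ
  const_mem : ∀ r : ℝ, BoundedContinuousFunction.const S r ∈ Γ
  determining : ∀ μ ν : Measure S, IsProbabilityMeasure μ → IsProbabilityMeasure ν →
    (∀ g ∈ Γ, ∫ x, g x ∂μ = ∫ x, g x ∂ν) → μ = ν

/-- Bounded continuous c-Lipschitz functions. -/
def LipB [TopologicalSpace S] (c : S → S → ℝ≥0∞) : Set (BoundedContinuousFunction S ℝ) :=
  {f | ∀ x y, ((f x - f y : ℝ) : EReal) ≤ (c x y : EReal)}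

/-- Continuous (possibly unbounded) c-Lipschitz functions. -/
def LipU [TopologicalSpace S] (c : S → S → ℝ≥0∞) : Set (S → ℝ) :=
  {f | Continuous f ∧ ∀ x y, ((f x - f y : ℝ) : EReal) ≤ (c x y : EReal)}

/-- Optimal transport cost in dual form. -/
def Wc [MeasurableSpace S] [TopologicalSpace S] (c : S → S → ℝ≥0∞) (μ γ : Measure S) : EReal :=
  ⨆ g ∈ LipB c, ((∫ x, g x ∂μ - ∫ x, g x ∂γ : ℝ) : EReal)

/-- Topological support of a measure. -/
def msupport [TopologicalSpace S] [MeasurableSpace S] (ν : Measure S) : Set S :=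
  {x | ∀ U ∈ 𝓝 x, 0 < ν U}

/-- Upper (outer) Lebesgue integral. -/
def upperLintegral [MeasurableSpace S] (π : Measure S) (F : S → ℝ≥0∞) : ℝ≥0∞ :=
  ⨅ G ∈ {G : S → ℝ≥0∞ | Measurable G ∧ ∀ x, F x ≤ G x}, ∫⁻ x, G x ∂π


-- The canonical map from `EReal` to `[0,∞]`, sending `⊤` to `⊤` and everything
-- else to the `ENNReal.ofReal` of its real part.
open scoped Classical in
noncomputable def eRealToENNReal (e : EReal) : ℝ≥0∞ :=
  if e = ⊤ then ⊤ else ENNReal.ofReal e.toReal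


lemma ofReal_coe_le_eRealToENNReal {r : ℝ} {e : EReal} (h : (r : EReal) ≤ e) :
    ENNReal.ofReal r ≤ eRealToENNReal e := by
  unfold eRealToENNReal
  split_ifs with he
  · exact le_top
  · induction e using EReal.rec with
    | bot => exact absurd h (by simp)
    | coe x =>
        rw [EReal.toReal_coe]
        exact ENNReal.ofReal_le_ofReal (EReal.coe_le_coe_iff.mp h)
    | top => exact absurd rfl he

lemma coe_le_coe_ofReal (r : ℝ) : (r : EReal) ≤ ((ENNReal.ofReal r : ℝ≥0∞) : EReal) := by
  rw [EReal.coe_ennreal_ofReal]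
  exact_mod_cast le_max_left r 0

theorem stmt19 {S : Type*} [TopologicalSpace S] [PolishSpace S] [MeasurableSpace S] [BorelSpace S]
    (Γ : Set (BoundedContinuousFunction S ℝ)) (hΓ : Admissible Γ)
    (p q : ProbabilityTheory.Kernel S S)
    [ProbabilityTheory.IsMarkovKernel p] [ProbabilityTheory.IsMarkovKernel q]
    (πq : Measure S) [IsProbabilityMeasure πq]
    (hstat : πq.bind (fun x => q x) = πq)
    (f : S → ℝ) (g : BoundedContinuousFunction S ℝ) (hg : g ∈ Γ) (a : ℝ)
    (hf : ∀ x, f x = - Real.log (∫ y, Real.exp (-(g y)) ∂(p x)) - g x + a) :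
    ((∫ x, f x ∂πq : ℝ) : EReal) ≤
      ((upperLintegral πq (fun x => eRealToENNReal (Gdiv Γ (q x) (p x))) : ℝ≥0∞) : EReal) +
        (a : EReal) := by
  classical
  set C := ‖g‖ with hC
  have hgb : ∀ x : S, |g x| ≤ C := fun x => g.norm_coe_le_norm x
  -- inner integral of exp(-g) and its log
  set L : S → ℝ := fun x => Real.log (∫ y, Real.exp (-(g y)) ∂(p x)) with hLdef
  have hexp_int : ∀ x, Integrable (fun y => Real.exp (-(g y))) (p x) := by
    intro x
    refine Integrable.mono' (integrable_const (Real.exp C))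
      (Continuous.aestronglyMeasurable (by continuity)) ?_
    refine Eventually.of_forall fun y => ?_
    rw [Real.norm_eq_abs, abs_of_pos (Real.exp_pos _)]
    exact Real.exp_le_exp.mpr (by linarith [(abs_le.mp (hgb y)).1])
  have hexp_lb : ∀ x, Real.exp (-C) ≤ ∫ y, Real.exp (-(g y)) ∂(p x) := by
    intro x
    calc Real.exp (-C) = ∫ _, Real.exp (-C) ∂(p x) := by simp
      _ ≤ ∫ y, Real.exp (-(g y)) ∂(p x) := by
          refine integral_mono (integrable_const _) (hexp_int x) fun y => ?_
          exact Real.exp_le_exp.mpr (by linarith [(abs_le.mp (hgb y)).2])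
  have hexp_ub : ∀ x, ∫ y, Real.exp (-(g y)) ∂(p x) ≤ Real.exp C := by
    intro x
    calc ∫ y, Real.exp (-(g y)) ∂(p x) ≤ ∫ _, Real.exp C ∂(p x) := by
          refine integral_mono (hexp_int x) (integrable_const _) fun y => ?_
          exact Real.exp_le_exp.mpr (by linarith [(abs_le.mp (hgb y)).1])
      _ = Real.exp C := by simp
  have hLb : ∀ x, |L x| ≤ C := by
    intro x
    have hpos : (0:ℝ) < ∫ y, Real.exp (-(g y)) ∂(p x) :=
      lt_of_lt_of_le (Real.exp_pos _) (hexp_lb x)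
    rw [abs_le]
    constructor
    · have := Real.log_le_log (Real.exp_pos (-C)) (hexp_lb x)
      rwa [Real.log_exp] at this
    · have := Real.log_le_log hpos (hexp_ub x)
      rwa [Real.log_exp] at this
  have hLmeas : Measurable L := by
    have h1 : StronglyMeasurable fun z : S × S => Real.exp (-(g z.2)) :=
      (Continuous.comp Real.continuous_exp
        (Continuous.neg (g.continuous.comp continuous_snd))).stronglyMeasurable
    exact Real.measurable_log.comp
      (StronglyMeasurable.integral_kernel_prod_right' (κ := p) h1).measurable
  set Q : S → ℝ := fun x => ∫ y, g y ∂(q x) with hQdef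
  have hQmeas : Measurable Q := by
    have h1 : StronglyMeasurable fun z : S × S => g z.2 :=
      (g.continuous.comp continuous_snd).stronglyMeasurable
    exact (StronglyMeasurable.integral_kernel_prod_right' (κ := q) h1).measurable
  have hQb : ∀ x, |Q x| ≤ C := fun x => g.norm_integral_le_norm (μ := q x)
  set h : S → ℝ := fun x => -(Q x) - L x with hhdef
  have hhmeas : Measurable h := (hQmeas.neg).sub hLmeas
  have hhb : ∀ x, |h x| ≤ 2 * C := by
    intro x
    have := hQb x
    have := hLb x
    simp only [hhdef]
    rw [abs_le] at *
    constructor <;> [skip; skip] <;> cases this <;> linarith [(abs_le.mp (hQb x)).1, (abs_le.mp (hQb x)).2, (abs_le.mp (hLb x)).1, (abs_le.mp (hLb x)).2]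
  have hhint : Integrable h πq := by
    refine Integrable.mono' (integrable_const (2 * C))
      hhmeas.aestronglyMeasurable (Eventually.of_forall fun x => ?_)
    rw [Real.norm_eq_abs]; exact hhb x
  have hLint : Integrable L πq := by
    refine Integrable.mono' (integrable_const C)
      hLmeas.aestronglyMeasurable (Eventually.of_forall fun x => ?_)
    rw [Real.norm_eq_abs]; exact hLb x
  have hQint : Integrable Q πq := by
    refine Integrable.mono' (integrable_const C)
      hQmeas.aestronglyMeasurable (Eventually.of_forall fun x => ?_)
    rw [Real.norm_eq_abs]; exact hQb x
  -- stationarity: ∫ g dπq = ∫ Q dπq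
  have hstat' : ∫ x, g x ∂πq = ∫ x, Q x ∂πq := by
    set φ : S → ℝ := fun y => g y + C with hφdef
    have hφnn : ∀ y, 0 ≤ φ y := fun y => by
      simp only [hφdef]; linarith [(abs_le.mp (hgb y)).1]
    have hφint : ∀ (ν : Measure S), IsProbabilityMeasure ν → Integrable φ ν := by
      intro ν hν
      exact (g.integrable ν).add (integrable_const C)
    have hφof : ∀ (ν : Measure S), IsProbabilityMeasure ν →
        ∫⁻ y, ENNReal.ofReal (φ y) ∂ν = ENNReal.ofReal (∫ y, φ y ∂ν) := by
      intro ν hν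
      exact (ofReal_integral_eq_lintegral_ofReal (hφint ν hν)
        (Eventually.of_forall hφnn)).symm
    have hφmeas : Measurable fun y => ENNReal.ofReal (φ y) :=
      ENNReal.measurable_ofReal.comp ((g.continuous.measurable).add measurable_const)
    have hlb : ∫⁻ y, ENNReal.ofReal (φ y) ∂πq
        = ∫⁻ x, ∫⁻ y, ENNReal.ofReal (φ y) ∂(q x) ∂πq := by
      conv_lhs => rw [← hstat]
      exact Measure.lintegral_bind (ProbabilityTheory.Kernel.measurable q).aemeasurable hφmeas.aemeasurable
    have hinner : ∀ x, ∫⁻ y, ENNReal.ofReal (φ y) ∂(q x)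
        = ENNReal.ofReal (∫ y, φ y ∂(q x)) := fun x => hφof (q x) inferInstance
    have hφπ : ∫⁻ y, ENNReal.ofReal (φ y) ∂πq = ENNReal.ofReal (∫ y, φ y ∂πq) :=
      hφof πq inferInstance
    rw [hφπ] at hlb
    have hrhs : (∫⁻ x, ∫⁻ y, ENNReal.ofReal (φ y) ∂(q x) ∂πq).toReal
        = ∫ x, ∫ y, φ y ∂(q x) ∂πq := by
      simp_rw [hinner]
      rw [← integral_toReal]
      · congr 1
        ext x
        rw [ENNReal.toReal_ofReal (integral_nonneg hφnn)]
      · exact (ENNReal.measurable_ofReal.comp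
          (by
            have h1 : StronglyMeasurable fun z : S × S => φ z.2 :=
              ((g.continuous.comp continuous_snd).add continuous_const).stronglyMeasurable
            exact (StronglyMeasurable.integral_kernel_prod_right' (κ := q) h1).measurable)).aemeasurable
      · exact Eventually.of_forall fun x => ENNReal.ofReal_lt_top
    have hφeq : ∫ y, φ y ∂πq = ∫ x, ∫ y, φ y ∂(q x) ∂πq := by
      rw [← hrhs, ← hlb, ENNReal.toReal_ofReal (integral_nonneg hφnn)]
    have e1 : ∫ y, φ y ∂πq = ∫ y, g y ∂πq + C := by
      rw [hφdef]
      simp [integral_add (g.integrable πq) (integrable_const C)]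
    have e2 : ∀ x, ∫ y, φ y ∂(q x) = Q x + C := by
      intro x
      rw [hφdef]
      simp [integral_add (g.integrable (q x)) (integrable_const C), hQdef]
    have e3 : ∫ x, ∫ y, φ y ∂(q x) ∂πq = ∫ x, Q x ∂πq + C := by
      simp_rw [e2]
      simp [integral_add hQint (integrable_const C)]
    rw [e1, e3] at hφeq
    linarith
  -- ∫ f = ∫ h + a
  have hfint : ∫ x, f x ∂πq = ∫ x, h x ∂πq + a := by
    have hfeq : (fun x => f x) = fun x => -L x - g x + a := funext fun x => hf x
    have i1 : Integrable (fun x => -L x - g x) πq := hLint.neg.sub (g.integrable πq)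
    have e0 : ∫ x, f x ∂πq = ∫ x, (-L x - g x) ∂πq + a := by
      rw [hfeq, integral_add i1 (integrable_const a)]
      simp
    have e4 : ∫ x, (-L x - g x) ∂πq = (∫ x, -L x ∂πq) - ∫ x, g x ∂πq :=
      integral_sub hLint.neg (g.integrable πq)
    have e5 : ∫ x, -L x ∂πq = -∫ x, L x ∂πq := integral_neg _
    have e6 : ∫ x, h x ∂πq = (∫ x, -Q x ∂πq) - ∫ x, L x ∂πq :=
      integral_sub hQint.neg hLint
    have e7 : ∫ x, -Q x ∂πq = -∫ x, Q x ∂πq := integral_neg _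
    rw [e0, e4, e5, hstat', e6, e7]
    ring
  -- pointwise bound by Gdiv
  have hG : ∀ x, ((h x : ℝ) : EReal) ≤ Gdiv Γ (q x) (p x) := by
    intro x
    have hmem : -g ∈ Γ := hΓ.neg_mem g hg
    have hle := le_iSup₂ (f := fun (g' : BoundedContinuousFunction S ℝ) (_ : g' ∈ Γ) =>
      ((∫ y, g' y ∂(q x) - Real.log (∫ y, Real.exp (g' y) ∂(p x)) : ℝ) : EReal)) (-g) hmem
    refine le_trans (le_of_eq ?_) hle
    congr 1
    simp only [BoundedContinuousFunction.coe_neg, Pi.neg_apply, integral_neg]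
    rfl
  have hpt : ∀ x, ENNReal.ofReal (h x) ≤ eRealToENNReal (Gdiv Γ (q x) (p x)) :=
    fun x => ofReal_coe_le_eRealToENNReal (hG x)
  -- bound the integral by the upper lintegral
  have hU : ENNReal.ofReal (∫ x, h x ∂πq) ≤
      upperLintegral πq (fun x => eRealToENNReal (Gdiv Γ (q x) (p x))) := by
    refine le_iInf₂ fun G hG' => ?_
    obtain ⟨hGm, hGle⟩ := hG'
    have hpp : Integrable (fun x => max (h x) 0) πq := hhint.pos_part
    calc ENNReal.ofReal (∫ x, h x ∂πq)
        ≤ ENNReal.ofReal (∫ x, max (h x) 0 ∂πq) :=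
          ENNReal.ofReal_le_ofReal (integral_mono hhint hpp fun x => le_max_left _ _)
      _ = ∫⁻ x, ENNReal.ofReal (max (h x) 0) ∂πq :=
          ofReal_integral_eq_lintegral_ofReal hpp
            (Eventually.of_forall fun x => le_max_right _ _)
      _ = ∫⁻ x, ENNReal.ofReal (h x) ∂πq := by
          refine lintegral_congr fun x => ?_
          rcases le_total (h x) 0 with h0 | h0
          · rw [max_eq_right h0, ENNReal.ofReal_zero,
              ENNReal.ofReal_eq_zero.mpr h0]
          · rw [max_eq_left h0]
      _ ≤ ∫⁻ x, G x ∂πq := lintegral_mono fun x => (hpt x).trans (hGle x)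
  -- conclude
  rw [hfint]
  have : ((∫ x, h x ∂πq + a : ℝ) : EReal) = ((∫ x, h x ∂πq : ℝ) : EReal) + (a : EReal) := by
    exact_mod_cast EReal.coe_add _ _
  rw [this]
  refine add_le_add_left ?_ (a : EReal)
  calc ((∫ x, h x ∂πq : ℝ) : EReal)
      ≤ ((ENNReal.ofReal (∫ x, h x ∂πq) : ℝ≥0∞) : EReal) := coe_le_coe_ofReal _
    _ ≤ _ := EReal.coe_ennreal_le_coe_ennreal_iff.mpr hU

end
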